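/- Let K/F be cyclic Galois of degree n with ⟨σ⟩ = Gal(K/F), and let f(t) = t^2 − a_1 t − a_0 ∈ K[t;σ] be not right invariant. If a_1 ≠ 0 then Nuc(S_f) = F, and if a_1 = 0, a_0 ≠ 0 then Nuc(S_f) = Fix(σ^2). Moreover, if n is odd then Fix(σ^2) = F, and if n is even then Fix(σ^2) ≠ F. -/

import Mathlib

open Polynomial

/-- Skew (twisted) multiplication on polynomials over `K`, representing the
multiplication of the twisted polynomial ring `K[t;σ]` with `t·a = σ(a)·t`:
`(a t^i)·(b t^j) = a σ^i(b) t^{i+j}`. -/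
noncomputable def sMul {K : Type} [Field K] (σ : K ≃+* K) (p q : K[X]) : K[X] :=
  p.sum fun i a => C a * (q.map ((σ ^ i : K ≃+* K) : K →+* K)) * X ^ i

/-- `f` is right invariant in `K[t;σ]`: `f·g ∈ R·f` for all `g`. -/
def RightInvariant {K : Type} [Field K] (σ : K ≃+* K) (f : K[X]) : Prop :=
  ∀ g : K[X], ∃ q : K[X], sMul σ f g = sMul σ q f

/-- Membership in the eigenring of `f`, i.e. the right nucleus of the Petit
algebra `S_f = K[t;σ]/K[t;σ]f` (for `f` not right invariant):
`{g | deg g < deg f ∧ f·g ∈ R·f}`. -/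
def InEigenring {K : Type} [Field K] (σ : K ≃+* K) (f g : K[X]) : Prop :=
  g.degree < f.degree ∧ ∃ q : K[X], sMul σ f g = sMul σ q f

/-- Remainder of right division by `f` in `K[t;σ]` (Petit multiplication in
`S_f` is `g ∘ h = (g·h) mod_r f`). -/
noncomputable def modRight {K : Type} [Field K] (σ : K ≃+* K) (f g : K[X]) : K[X] := by
  classical
  exact if h : ∃ r : K[X], r.degree < f.degree ∧ ∃ q : K[X], g = sMul σ q f + r
    then h.choose else 0

/-- Coefficients of the skew product. -/
lemma coeff_sMul {K : Type} [Field K] (σ : K ≃+* K) (p q : K[X]) (k : ℕ) :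
    (sMul σ p q).coeff k
      = ∑ i ∈ Finset.range (k+1), p.coeff i * (σ ^ i : K ≃+* K) (q.coeff (k - i)) := by
  rw [sMul, Polynomial.sum, finset_sum_coeff]
  simp only [coeff_mul_X_pow', coeff_C_mul, coeff_map, mul_ite, mul_zero]
  rw [← Finset.sum_filter]
  apply Finset.sum_subset
  · intro i hi
    simp only [Finset.mem_filter, Polynomial.mem_support_iff] at hi
    exact Finset.mem_range.2 (by omega)
  · intro i hi hni
    simp only [Finset.mem_filter, Polynomial.mem_support_iff, Finset.mem_range] at hi hni
    have : p.coeff i = 0 := by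
      by_contra h
      exact hni ⟨h, by omega⟩
    simp [this]

/-- The eigenring condition for a constant `d` and a degree-2 polynomial
`f = X² - a₁X - a₀`: it amounts to `σ²(d)·aᵢ = aᵢ·σ^i(d)` for `i = 0, 1`. -/
lemma inEigen_iff {K : Type} [Field K] (σr : K ≃+* K) (a₀ a₁ : K) (f : K[X])
    (hf : f = X ^ 2 - C a₁ * X - C a₀) (d : K) :
    InEigenring σr f (C d) ↔
      (a₁ * σr d = σr (σr d) * a₁ ∧ a₀ * d = σr (σr d) * a₀) := by
  have hdeg : f.degree = 2 := by rw [hf]; compute_degree!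
  have hsq : ∀ x : K, (σr ^ 2 : K ≃+* K) x = σr (σr x) := by
    intro x; rw [sq]; rfl
  have c0 : f.coeff 0 = -a₀ := by simp [hf]
  have c1 : f.coeff 1 = -a₁ := by simp [hf]
  have c2 : f.coeff 2 = 1 := by simp [hf, coeff_C]
  have chi : ∀ k, 2 < k → f.coeff k = 0 := by
    intro k hk
    apply coeff_eq_zero_of_degree_lt
    rw [hdeg]
    exact_mod_cast hk
  have hL : ∀ k, (sMul σr f (C d)).coeff k = f.coeff k * (σr ^ k : K ≃+* K) d := by
    intro k
    rw [coeff_sMul, Finset.sum_eq_single k]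
    · simp
    · intro i hi hne
      have : k - i ≠ 0 := by
        simp only [Finset.mem_range] at hi; omega
      simp [coeff_C, this]
    · intro h; exact absurd (Finset.self_mem_range_succ k) h
  have hone : ∀ x : K, (1 : K ≃+* K) x = x := fun _ => rfl
  have hC : ∀ (c : K) (k : ℕ), (sMul σr (C c) f).coeff k = c * f.coeff k := by
    intro c k
    rw [coeff_sMul, Finset.sum_eq_single 0]
    · rw [Nat.sub_zero, pow_zero, hone, coeff_C]; simp
    · intro i hi hne; simp [coeff_C, hne]
    · intro h; exact absurd (Finset.mem_range.2 (by omega)) h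
  constructor
  · rintro ⟨-, q, hq⟩
    have hqc : q.natDegree = 0 := by
      by_contra hm
      have hq0 : q ≠ 0 := fun h => hm (h ▸ natDegree_zero)
      set m := q.natDegree with hmdef
      have h1 : (sMul σr f (C d)).coeff (m + 2) = 0 := by
        rw [hL, chi (m + 2) (by omega), zero_mul]
      have h2 : (sMul σr q f).coeff (m + 2) = q.coeff m := by
        rw [coeff_sMul, Finset.sum_eq_single m]
        · have : m + 2 - m = 2 := by omega
          rw [this, c2, map_one, mul_one]
        · intro i hi hne
          rcases lt_or_gt_of_ne hne with h | h
          · rw [chi (m + 2 - i) (by omega), map_zero, mul_zero]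
          · rw [coeff_eq_zero_of_natDegree_lt h, zero_mul]
        · intro h; exact absurd (Finset.mem_range.2 (by omega)) h
      rw [hq, h2] at h1
      exact (Polynomial.leadingCoeff_ne_zero.2 hq0) h1
    obtain ⟨c, rfl⟩ := Polynomial.natDegree_eq_zero.1 hqc
    have key : ∀ k, f.coeff k * (σr ^ k : K ≃+* K) d = c * f.coeff k := by
      intro k; rw [← hL, ← hC, hq]
    have k2 := key 2
    rw [c2, one_mul, mul_one, hsq] at k2
    have k1 := key 1
    rw [c1, pow_one] at k1
    have k0 := key 0
    rw [c0, pow_zero, hone] at k0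
    constructor
    · rw [k2]; linear_combination -k1
    · rw [k2]; linear_combination -k0
  · rintro ⟨h1, h0⟩
    refine ⟨?_, C (σr (σr d)), ?_⟩
    · rw [hdeg]
      exact lt_of_le_of_lt degree_C_le (by decide)
    · ext k
      rw [hL, hC]
      match k with
      | 0 =>
        rw [c0, pow_zero, hone]
        linear_combination -h0
      | 1 =>
        rw [c1, pow_one]; linear_combination -h1
      | 2 =>
        rw [c2, one_mul, mul_one, hsq]
      | (k + 3) =>
        rw [chi (k + 3) (by omega), zero_mul, mul_zero]

/-- An element fixed by `τ` is fixed by every integer power of `τ`. -/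
lemma zpow_fix {F K : Type} [Field F] [Field K] [Algebra F K]
    (τ : K ≃ₐ[F] K) (d : K) (hd : τ d = d) : ∀ k : ℤ, (τ ^ k) d = d := by
  have hnat : ∀ m : ℕ, (τ ^ m) d = d := by
    intro m
    induction m with
    | zero => rfl
    | succ m ih => rw [pow_succ, AlgEquiv.mul_apply, hd, ih]
  intro k
  rcases k with m | m
  · simpa using hnat m
  · rw [zpow_negSucc]
    show ((τ ^ (m + 1))⁻¹ : K ≃ₐ[F] K) d = d
    have hinv : ((τ ^ (m + 1))⁻¹ : K ≃ₐ[F] K) = (τ ^ (m + 1)).symm := rfl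
    rw [hinv, AlgEquiv.symm_apply_eq, hnat]

/-- Section 5.1 (degree 2): let `K/F` be cyclic Galois of degree `n` with Galois
group `⟨σ⟩` and `f(t) = t² - a₁t - a₀ ∈ K[t;σ]` not right invariant. If `a₁ ≠ 0`
then `Nuc(S_f) = F`; if `a₁ = 0` and `a₀ ≠ 0` then `Nuc(S_f) = Fix(σ²)`.
Moreover `Fix(σ²) = F` if `n` is odd, and `Fix(σ²) ≠ F` if `n` is even. -/
theorem nucleus_degree_two (F K : Type) [Field F] [Field K] [Algebra F K]
    [IsGalois F K] [FiniteDimensional F K]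
    (n : ℕ) (hn : Module.finrank F K = n)
    (σ : K ≃ₐ[F] K) (hgen : ∀ τ : K ≃ₐ[F] K, τ ∈ Subgroup.zpowers σ)
    (σr : K ≃+* K) (hσr : ∀ x, σr x = σ x)
    (a₀ a₁ : K) (f : K[X]) (hf : f = X ^ 2 - C a₁ * X - C a₀)
    (hri : ¬ RightInvariant σr f) :
    (a₁ ≠ 0 → {d : K | InEigenring σr f (C d)} =
        ((⊥ : IntermediateField F K) : Set K)) ∧
      (a₁ = 0 → a₀ ≠ 0 → {d : K | InEigenring σr f (C d)} =
        (IntermediateField.fixedField (Subgroup.zpowers (σ ^ 2)) : Set K)) ∧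
      (Odd n → IntermediateField.fixedField (Subgroup.zpowers (σ ^ 2)) = ⊥) ∧
      (Even n → IntermediateField.fixedField (Subgroup.zpowers (σ ^ 2)) ≠ ⊥) := by
  classical
  have hcard : Fintype.card (K ≃ₐ[F] K) = n := by
    rw [← hn, ← Nat.card_eq_fintype_card]; exact IsGalois.card_aut_eq_finrank F K
  have htop : Subgroup.zpowers σ = ⊤ := (Subgroup.eq_top_iff' _).2 hgen
  have hord : orderOf σ = n := by
    rw [← Nat.card_zpowers σ, htop]
    rw [← hcard]
    simp only [Nat.card_eq_fintype_card]
    exact Fintype.card_congr (Equiv.subtypeUnivEquiv fun _ => Subgroup.mem_top _)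
  have hbot : IntermediateField.fixedField (⊤ : Subgroup (K ≃ₐ[F] K)) = ⊥ := by
    have h := IsGalois.fixedField_fixingSubgroup (⊥ : IntermediateField F K)
    rwa [IntermediateField.fixingSubgroup_bot] at h
  have hbot_fix : ∀ d : K, d ∈ (⊥ : IntermediateField F K) → ∀ τ : K ≃ₐ[F] K, τ d = d := by
    intro d hd τ
    obtain ⟨x, rfl⟩ := IntermediateField.mem_bot.1 hd
    exact τ.commutes x
  refine ⟨?_, ?_, ?_, ?_⟩
  · -- a₁ ≠ 0
    intro ha₁
    ext d
    simp only [Set.mem_setOf_eq, SetLike.mem_coe]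
    rw [inEigen_iff σr a₀ a₁ f hf d]
    constructor
    · rintro ⟨h1, -⟩
      rw [mul_comm a₁ (σr d)] at h1
      have h2 : σr d = σr (σr d) := mul_right_cancel₀ ha₁ h1
      have h3 : d = σr d := σr.injective h2
      have hdd : σ d = d := by rw [← hσr, ← h3]
      rw [← hbot]
      intro g
      obtain ⟨k, hk⟩ := hgen (g : K ≃ₐ[F] K)
      show (g : K ≃ₐ[F] K) d = d
      rw [← hk]
      exact zpow_fix σ d hdd k
    · intro hd
      have h := hbot_fix d hd
      have hd1 : σr d = d := by rw [hσr]; exact h σ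
      have hd2 : σr (σr d) = d := by rw [hd1, hd1]
      rw [hd1, hd1]
      exact ⟨mul_comm _ _, mul_comm _ _⟩
  · -- a₁ = 0, a₀ ≠ 0
    intro ha₁ ha₀
    ext d
    simp only [Set.mem_setOf_eq, SetLike.mem_coe]
    rw [inEigen_iff σr a₀ a₁ f hf d]
    have hσ2 : ∀ x : K, (σ ^ 2) x = σr (σr x) := by
      intro x
      rw [sq, AlgEquiv.mul_apply, hσr, hσr]
    constructor
    · rintro ⟨-, h0⟩
      rw [mul_comm a₀ d] at h0
      have h2 : σr (σr d) = d := (mul_right_cancel₀ ha₀ h0).symm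
      have hdd : (σ ^ 2) d = d := by rw [hσ2, h2]
      intro g
      obtain ⟨k, hk⟩ := Subgroup.mem_zpowers_iff.1 g.2
      show (g : K ≃ₐ[F] K) d = d
      rw [← hk]
      exact zpow_fix (σ ^ 2) d hdd k
    · intro hd
      have hdd : (σ ^ 2) d = d := hd ⟨σ ^ 2, Subgroup.mem_zpowers _⟩
      have h2 : σr (σr d) = d := by rw [← hσ2, hdd]
      rw [h2, ha₁]
      exact ⟨by ring, mul_comm _ _⟩
  · -- odd
    intro hodd
    obtain ⟨m, hm⟩ := hodd
    have hσn : σ ^ n = 1 := by rw [← hord]; exact pow_orderOf_eq_one σ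
    have hmem : σ ∈ Subgroup.zpowers (σ ^ 2) := by
      have h1 : (σ ^ 2) ^ (m + 1) = σ := by
        rw [← pow_mul]
        have h2 : 2 * (m + 1) = n + 1 := by omega
        rw [h2, pow_succ, hσn, one_mul]
      exact Subgroup.mem_zpowers_iff.2 ⟨((m + 1 : ℕ) : ℤ), by rw [zpow_natCast]; exact h1⟩
    have h3 : Subgroup.zpowers (σ ^ 2) = ⊤ :=
      le_antisymm le_top (by rw [← htop]; exact Subgroup.zpowers_le.2 hmem)
    rw [h3, hbot]
  · -- even
    intro heven h
    have h2 : Subgroup.zpowers (σ ^ 2) = ⊤ := by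
      have h4 := IntermediateField.fixingSubgroup_fixedField (Subgroup.zpowers (σ ^ 2))
      rw [h, IntermediateField.fixingSubgroup_bot] at h4
      exact h4.symm
    have hσmem : σ ∈ Subgroup.zpowers (σ ^ 2) := h2 ▸ Subgroup.mem_top σ
    obtain ⟨k, hk⟩ := Subgroup.mem_zpowers_iff.1 hσmem
    have e1 : σ ^ ((2 : ℤ) * k) = σ := by
      rw [zpow_mul]
      exact_mod_cast hk
    have e2 : σ ^ ((2 : ℤ) * k - 1) = 1 := by
      rw [zpow_sub, e1, zpow_one]
      simp
    have hdvd : ((orderOf σ : ℤ)) ∣ (2 * k - 1) := orderOf_dvd_iff_zpow_eq_one.2 e2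
    rw [hord] at hdvd
    obtain ⟨m2, hm2⟩ := heven
    have h2dvd : (2 : ℤ) ∣ 2 * k - 1 := dvd_trans ⟨m2, by omega⟩ hdvd
    obtain ⟨c, hc⟩ := h2dvd
    omega
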